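/- Let n ≥ 1 and q ≥ 2 be integers. Then N(H(n,q)) = n(q−1): the Hamming graph H(n,q) admits an addressing of length n(q−1), and admits no addressing of length less than n(q−1). -/

import Mathlib

/-- The Hamming graph `H(n,q)`: vertices are `n`-tuples over a `q`-letter alphabet, two
tuples being adjacent iff their Hamming distance is `1`. -/
def hammingGraph (n q : ℕ) : SimpleGraph (Fin n → Fin q) where
  Adj x y := hammingDist x y = 1
  symm := ⟨by intro x y h; show hammingDist y x = 1; rw [hammingDist_comm]; exact h⟩
  loopless := ⟨by intro x h; simp [hammingDist_self] at h⟩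

/-- An addressing of length `t` of a graph `G`: each vertex gets a `t`-tuple over a
three-symbol alphabet (`0` = symbol "0", `1` = symbol "a", `2` = symbol "b") such that the
graph distance between any two vertices equals the number of coordinates where one address
has `a` and the other has `b`. -/
def IsAddressing {V : Type*} (G : SimpleGraph V) {t : ℕ} (f : V → Fin t → Fin 3) : Prop :=
  ∀ u v : V, G.dist u v =
    (Finset.univ.filter fun i =>
      (f u i = 1 ∧ f v i = 2) ∨ (f u i = 2 ∧ f v i = 1)).card

/-- For `n ≥ 1` and `q ≥ 2`, `N(H(n,q)) = n(q−1)`: the Hamming graph admits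
an addressing of length `n(q−1)` and no shorter one. -/


lemma hg_exists_walk {n q : ℕ} : ∀ (d : ℕ) (x y : Fin n → Fin q), hammingDist x y = d →
    ∃ p : (hammingGraph n q).Walk x y, p.length = d := by
  intro d
  induction d with
  | zero => intro x y h; rw [hammingDist_eq_zero] at h; subst h; exact ⟨.nil, rfl⟩
  | succ d ih =>
    intro x y h
    have hne : ∃ i, x i ≠ y i := by
      by_contra hc
      push_neg at hc
      have : x = y := funext hc
      subst this
      simp [hammingDist_self] at h
    obtain ⟨i, hi⟩ := hne
    set z := Function.update x i (y i) with hz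
    have hadj : (hammingGraph n q).Adj x z := by
      show hammingDist x z = 1
      unfold hammingDist
      rw [Finset.card_eq_one]
      refine ⟨i, ?_⟩
      ext j
      simp only [Finset.mem_filter, Finset.mem_univ, true_and, Finset.mem_singleton]
      constructor
      · intro hj
        by_contra hji
        simp [hz, Function.update_of_ne hji] at hj
      · intro hj; subst hj; simpa [hz] using hi
    have hdz : hammingDist z y = d := by
      have : ({j | z j ≠ y j} : Finset (Fin n)) = ({j | x j ≠ y j} : Finset (Fin n)) \ {i} := by
        ext j
        by_cases hji : j = i
        · subst hji; simp [hz]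
        · simp [hz, Function.update_of_ne hji, hji]
      unfold hammingDist at h ⊢
      rw [this, Finset.card_sdiff_of_subset (by simp [hi]), h]
      simp
    obtain ⟨p, hp⟩ := ih z y hdz
    exact ⟨.cons hadj p, by simp [hp]⟩

lemma hg_walk_le {n q : ℕ} {x y : Fin n → Fin q} (p : (hammingGraph n q).Walk x y) :
    hammingDist x y ≤ p.length := by
  induction p with
  | nil => simp [hammingDist_self]
  | @cons u v w h p ih =>
    have h1 : hammingDist u v = 1 := h
    calc hammingDist u w ≤ hammingDist u v + hammingDist v w := hammingDist_triangle _ _ _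
    _ ≤ 1 + p.length := by omega
    _ = (SimpleGraph.Walk.cons h p).length := by simp [Nat.add_comm]

lemma hg_dist {n q : ℕ} (x y : Fin n → Fin q) :
    (hammingGraph n q).dist x y = hammingDist x y := by
  obtain ⟨p, hp⟩ := hg_exists_walk (hammingDist x y) x y rfl
  refine le_antisymm (hp ▸ SimpleGraph.dist_le p) ?_
  obtain ⟨p', hp'⟩ := (SimpleGraph.Walk.reachable p).exists_walk_length_eq_dist
  rw [← hp']
  exact hg_walk_le p'

def addrK (q : ℕ) (c : Fin q) (j : Fin (q-1)) : Fin 3 :=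
  if (j:ℕ)+1 = (c:ℕ) then 2 else if (c:ℕ) ≤ (j:ℕ) then 1 else 0

lemma addrK_card {q : ℕ} (c c' : Fin q) :
    (Finset.univ.filter fun j : Fin (q-1) =>
      (addrK q c j = 1 ∧ addrK q c' j = 2) ∨ (addrK q c j = 2 ∧ addrK q c' j = 1)).card
    = if c = c' then 0 else 1 := by
  have key : ∀ j : Fin (q-1),
      ((addrK q c j = 1 ∧ addrK q c' j = 2) ∨ (addrK q c j = 2 ∧ addrK q c' j = 1)) ↔
      (c ≠ c' ∧ (j : ℕ) + 1 = max (c:ℕ) (c':ℕ)) := by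
    intro j
    unfold addrK
    split_ifs <;> simp_all [Fin.ext_iff] <;> omega
  split_ifs with hcc
  · subst hcc
    simp only [key]
    simp
  · rw [Finset.card_eq_one]
    have hlt : max (c:ℕ) (c':ℕ) - 1 < q - 1 := by
      have := c.isLt; have := c'.isLt
      have : (c:ℕ) ≠ (c':ℕ) := fun h => hcc (Fin.ext h)
      omega
    refine ⟨⟨max (c:ℕ) (c':ℕ) - 1, hlt⟩, ?_⟩
    ext j
    rw [Finset.mem_filter, Finset.mem_singleton, key j, Fin.ext_iff]
    have : (c:ℕ) ≠ (c':ℕ) := fun h => hcc (Fin.ext h)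
    simp only [ne_eq, hcc, not_false_eq_true, true_and]
    simp only [Finset.mem_univ, true_and]
    omega

lemma hg_upper (n q : ℕ) (x y : Fin n → Fin q) :
    hammingDist x y =
    (Finset.univ.filter fun k : Fin (n * (q-1)) =>
      ((addrK q (x (finProdFinEquiv.symm k).1) (finProdFinEquiv.symm k).2 = 1 ∧
        addrK q (y (finProdFinEquiv.symm k).1) (finProdFinEquiv.symm k).2 = 2) ∨
       (addrK q (x (finProdFinEquiv.symm k).1) (finProdFinEquiv.symm k).2 = 2 ∧
        addrK q (y (finProdFinEquiv.symm k).1) (finProdFinEquiv.symm k).2 = 1))).card := by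
  set P : Fin n × Fin (q-1) → Prop := fun p =>
    (addrK q (x p.1) p.2 = 1 ∧ addrK q (y p.1) p.2 = 2) ∨
    (addrK q (x p.1) p.2 = 2 ∧ addrK q (y p.1) p.2 = 1) with hP
  have h1 : (Finset.univ.filter fun k : Fin (n * (q-1)) => P (finProdFinEquiv.symm k)).card
      = (Finset.univ.filter P).card := by
    rw [← Fintype.card_subtype, ← Fintype.card_subtype]
    exact Fintype.card_congr (finProdFinEquiv.symm.subtypeEquiv fun k => Iff.rfl)
  have h2 : (Finset.univ.filter P).card
      = ∑ i : Fin n, (Finset.univ.filter fun j : Fin (q-1) => P (i, j)).card := by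
    rw [← Fintype.card_subtype]
    rw [Fintype.card_congr (Equiv.subtypeProdEquivSigmaSubtype fun i j => P (i,j))]
    rw [Fintype.card_sigma]
    simp [Fintype.card_subtype]
  have h3 : ∀ i, (Finset.univ.filter fun j : Fin (q-1) => P (i, j)).card
      = if x i = y i then 0 else 1 := fun i => addrK_card (x i) (y i)
  calc hammingDist x y = ∑ i : Fin n, if x i = y i then 0 else 1 := by
        unfold hammingDist
        rw [Finset.card_filter]
        exact Finset.sum_congr rfl fun i _ => by by_cases h : x i = y i <;> simp [h]
  _ = _ := by rw [h1, h2]; exact (Finset.sum_congr rfl fun i _ => (h3 i).symm)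

noncomputable def vmap (m : ℕ) : (Fin m → ℚ) →ₗ[ℚ] (Fin (m+1) → ℚ) where
  toFun c j := if h : (j:ℕ) < m then c ⟨j, h⟩ else -(∑ j', c j')
  map_add' c d := by
    funext j
    by_cases h : (j:ℕ) < m <;> simp [h, Finset.sum_add_distrib] <;> ring
  map_smul' r c := by
    funext j
    by_cases h : (j:ℕ) < m <;> simp [h, Finset.mul_sum]

lemma vmap_sum (m : ℕ) (c : Fin m → ℚ) : ∑ j, vmap m c j = 0 := by
  rw [Fin.sum_univ_castSucc]
  have h1 : ∀ j : Fin m, vmap m c j.castSucc = c j := by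
    intro j
    simp [vmap, j.isLt]
  have h2 : vmap m c (Fin.last m) = -(∑ j', c j') := by
    simp [vmap]
  simp [h1, h2]

lemma vmap_exists_ne {m : ℕ} {c : Fin m → ℚ} (hc : c ≠ 0) : ∃ j, vmap m c j ≠ 0 := by
  obtain ⟨j, hj⟩ : ∃ j, c j ≠ 0 := by
    by_contra h; push_neg at h; exact hc (funext h)
  refine ⟨j.castSucc, ?_⟩
  have : vmap m c j.castSucc = c j := by simp [vmap, j.isLt]
  rw [this]; exact hj

noncomputable def wmap (n m : ℕ) : (Fin n → Fin m → ℚ) →ₗ[ℚ] ((Fin n → Fin (m+1)) → ℚ) where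
  toFun p x := ∑ i, vmap m (p i) (x i)
  map_add' p p' := by
    funext x
    simp [Finset.sum_add_distrib]
  map_smul' r p := by
    funext x
    simp [Finset.mul_sum]

noncomputable def evalMap {V : Type*} [Fintype V] {t : ℕ} (a : V → Fin t → Fin 3) :
    (V → ℚ) →ₗ[ℚ] (Fin t → ℚ) where
  toFun g i := ∑ x, (if a x i = 1 then (1:ℚ) else 0) * g x
  map_add' g g' := by
    funext i
    simp [mul_add, Finset.sum_add_distrib]
  map_smul' r g := by
    funext i
    simp only [RingHom.id_apply, Pi.smul_apply, smul_eq_mul]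
    rw [Finset.mul_sum]
    apply Finset.sum_congr rfl
    intros; ring

lemma sum_eval_zero {ι : Type*} [Fintype ι] [DecidableEq ι] {q : ℕ} (i : ι) (F : Fin q → ℚ)
    (hF : ∑ c, F c = 0) : ∑ x : ι → Fin q, F (x i) = 0 := by
  rw [← Equiv.sum_comp (Equiv.funSplitAt i (Fin q)).symm (fun x => F (x i))]
  have : ∀ p : Fin q × ({ j // j ≠ i } → Fin q),
      ((Equiv.funSplitAt i (Fin q)).symm p) i = p.1 := by
    intro p; simp [Equiv.funSplitAt, Equiv.piSplitAt]
  simp only [this]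
  rw [Fintype.sum_prod_type]
  simp only [Finset.sum_const, nsmul_eq_mul]
  rw [← Finset.mul_sum, hF, mul_zero]

lemma sum_if_eval_self {n q : ℕ} (k : Fin n) (c : Fin q) (F : Fin q → ℚ) :
    ∑ x : Fin n → Fin q, (if x k = c then F (x k) else 0)
      = (Fintype.card ({ j : Fin n // j ≠ k } → Fin q) : ℚ) * F c := by
  rw [← Equiv.sum_comp (Equiv.funSplitAt k (Fin q)).symm
    (fun x => if x k = c then F (x k) else 0)]
  have : ∀ p : Fin q × ({ j // j ≠ k } → Fin q),
      ((Equiv.funSplitAt k (Fin q)).symm p) k = p.1 := by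
    intro p; simp [Equiv.funSplitAt, Equiv.piSplitAt]
  simp only [this]
  rw [Fintype.sum_prod_type]
  simp only [Finset.sum_const, nsmul_eq_mul]
  rw [← Finset.mul_sum, Finset.sum_ite_eq' Finset.univ c F]
  rw [if_pos (Finset.mem_univ c), Fintype.card]

lemma sum_if_eval_ne {n q : ℕ} {k i : Fin n} (hik : i ≠ k) (c : Fin q) (F : Fin q → ℚ)
    (hF : ∑ c', F c' = 0) :
    ∑ x : Fin n → Fin q, (if x k = c then F (x i) else 0) = 0 := by
  rw [← Equiv.sum_comp (Equiv.funSplitAt k (Fin q)).symm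
    (fun x => if x k = c then F (x i) else 0)]
  have hk : ∀ p : Fin q × ({ j // j ≠ k } → Fin q),
      ((Equiv.funSplitAt k (Fin q)).symm p) k = p.1 := by
    intro p; simp [Equiv.funSplitAt, Equiv.piSplitAt]
  have hi : ∀ p : Fin q × ({ j // j ≠ k } → Fin q),
      ((Equiv.funSplitAt k (Fin q)).symm p) i = p.2 ⟨i, hik⟩ := by
    intro p; simp [Equiv.funSplitAt, Equiv.piSplitAt, hik]
  simp only [hk, hi]
  rw [Fintype.sum_prod_type]
  apply Finset.sum_eq_zero
  intro c' _
  by_cases h : c' = c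
  · simp only [h, if_true]
    exact sum_eval_zero (⟨i, hik⟩ : { j : Fin n // j ≠ k }) F hF
  · simp [h]

lemma wmap_sum (n m : ℕ) (p : Fin n → Fin m → ℚ) :
    ∑ x : Fin n → Fin (m+1), wmap n m p x = 0 := by
  show ∑ x : Fin n → Fin (m+1), ∑ i, vmap m (p i) (x i) = 0
  rw [Finset.sum_comm]
  apply Finset.sum_eq_zero
  intro i _
  exact sum_eval_zero i (vmap m (p i)) (vmap_sum m (p i))

lemma wmap_cond_sum (n m : ℕ) (p : Fin n → Fin m → ℚ) (k : Fin n) (c : Fin (m+1)) :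
    ∑ x : Fin n → Fin (m+1), (if x k = c then wmap n m p x else 0)
      = (Fintype.card ({ j : Fin n // j ≠ k } → Fin (m+1)) : ℚ) * vmap m (p k) c := by
  have hsplit : ∀ x : Fin n → Fin (m+1),
      (if x k = c then wmap n m p x else 0)
        = ∑ i, (if x k = c then vmap m (p i) (x i) else 0) := by
    intro x
    show (if x k = c then ∑ i, vmap m (p i) (x i) else 0) = _
    split <;> simp
  simp only [hsplit]
  rw [Finset.sum_comm]
  rw [Finset.sum_eq_single k]
  · exact sum_if_eval_self k c (vmap m (p k))
  · intro i _ hik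
    exact sum_if_eval_ne hik c (vmap m (p i)) (vmap_sum m (p i))
  · intro h; exact absurd (Finset.mem_univ k) h

lemma bilinear_factor {V : Type*} [Fintype V] (w a b : V → ℚ) :
    ∑ x, ∑ y, w x * w y * (a x * b y) = (∑ x, a x * w x) * (∑ y, b y * w y) := by
  rw [Finset.sum_mul_sum]
  exact Finset.sum_congr rfl fun x _ => Finset.sum_congr rfl fun y _ => by ring

lemma ind_split (s s' : Fin 3) :
    (if (s = 1 ∧ s' = 2) ∨ (s = 2 ∧ s' = 1) then (1:ℚ) else 0)
      = (if s = 1 then (1:ℚ) else 0) * (if s' = 2 then 1 else 0)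
        + (if s = 2 then (1:ℚ) else 0) * (if s' = 1 then 1 else 0) := by
  fin_cases s <;> fin_cases s' <;> simp [Fin.ext_iff]

lemma chi_split {q : ℕ} (a b : Fin q) :
    (if a = b then (1:ℚ) else 0)
      = ∑ c, (if a = c then (1:ℚ) else 0) * (if b = c then 1 else 0) := by
  simp only [ite_mul, one_mul, zero_mul]
  rw [Finset.sum_ite_eq Finset.univ a (fun c => if b = c then (1:ℚ) else 0)]
  simp [eq_comm]

lemma hg_lower {n m t : ℕ} (f : (Fin n → Fin (m+1)) → Fin t → Fin 3)
    (hf : ∀ u v : Fin n → Fin (m+1),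
      (hammingDist u v : ℚ) = ((Finset.univ.filter fun i =>
        (f u i = 1 ∧ f v i = 2) ∨ (f u i = 2 ∧ f v i = 1)).card : ℚ)) :
    n * m ≤ t := by
  by_contra ht
  push_neg at ht
  set L := (evalMap f).comp (wmap n m) with hL
  have hnotinj : ¬Function.Injective L := by
    intro hinj
    have h1 := LinearMap.finrank_le_finrank_of_injective hinj
    have hd : Module.finrank ℚ (Fin n → Fin m → ℚ) = n * m := by
      rw [Module.finrank_pi_fintype ℚ]
      simp [Module.finrank_fintype_fun_eq_card]
    have hc : Module.finrank ℚ (Fin t → ℚ) = t := by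
      simp [Module.finrank_fintype_fun_eq_card]
    rw [hd, hc] at h1
    omega
  have hker : ∃ p : Fin n → Fin m → ℚ, p ≠ 0 ∧ L p = 0 := by
    have : LinearMap.ker L ≠ ⊥ := fun h => hnotinj (LinearMap.ker_eq_bot.mp h)
    obtain ⟨p, hpmem, hpne⟩ := Submodule.exists_mem_ne_zero_of_ne_bot this
    exact ⟨p, hpne, hpmem⟩
  obtain ⟨p, hp0, hLp⟩ := hker
  set w : (Fin n → Fin (m+1)) → ℚ := wmap n m p with hw
  set Q : ℚ := ∑ x, ∑ y, w x * w y * (hammingDist x y : ℚ) with hQ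
  -- Addressing side: Q = 0
  have hA : ∀ i : Fin t, ∑ x, (if f x i = 1 then (1:ℚ) else 0) * w x = 0 := by
    intro i
    have := congrFun hLp i
    simpa [hL, evalMap, wmap, hw] using this
  have hQ0 : Q = 0 := by
    have hind : ∀ x y : Fin n → Fin (m+1), (hammingDist x y : ℚ) = ∑ i : Fin t,
        ((if f x i = 1 then (1:ℚ) else 0) * (if f y i = 2 then 1 else 0)
          + (if f x i = 2 then (1:ℚ) else 0) * (if f y i = 1 then 1 else 0)) := by
      intro x y
      rw [hf x y, Finset.natCast_card_filter]
      exact Finset.sum_congr rfl fun i _ => ind_split (f x i) (f y i)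
    calc Q = ∑ x, ∑ y, ∑ i : Fin t,
        (w x * w y * ((if f x i = 1 then (1:ℚ) else 0) * (if f y i = 2 then 1 else 0))
          + w x * w y * ((if f x i = 2 then (1:ℚ) else 0) * (if f y i = 1 then 1 else 0))) := by
          rw [hQ]
          refine Finset.sum_congr rfl fun x _ => Finset.sum_congr rfl fun y _ => ?_
          rw [hind x y, Finset.mul_sum]
          exact Finset.sum_congr rfl fun i _ => by ring
    _ = ∑ i : Fin t, ∑ x, ∑ y,
        (w x * w y * ((if f x i = 1 then (1:ℚ) else 0) * (if f y i = 2 then 1 else 0))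
          + w x * w y * ((if f x i = 2 then (1:ℚ) else 0) * (if f y i = 1 then 1 else 0))) := by
          rw [Finset.sum_congr rfl fun x _ => Finset.sum_comm]
          exact Finset.sum_comm
    _ = 0 := by
          apply Finset.sum_eq_zero
          intro i _
          simp only [Finset.sum_add_distrib]
          rw [bilinear_factor, bilinear_factor, hA i]
          ring
  -- Spectral side: Q < 0
  have hSc : ∀ (k : Fin n) (c : Fin (m+1)), ∑ x, (if x k = c then (1:ℚ) else 0) * w x
      = (Fintype.card ({ j : Fin n // j ≠ k } → Fin (m+1)) : ℚ) * vmap m (p k) c := by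
    intro k c
    rw [← wmap_cond_sum n m p k c]
    exact Finset.sum_congr rfl fun x _ => by by_cases h : x k = c <;> simp [h, hw]
  have hwsum : ∑ x, w x = 0 := wmap_sum n m p
  have hQneg : Q < 0 := by
    have hchi : ∀ x y : Fin n → Fin (m+1), (hammingDist x y : ℚ)
        = ∑ k, (1 - ∑ c, (if x k = c then (1:ℚ) else 0) * (if y k = c then 1 else 0)) := by
      intro x y
      unfold hammingDist
      rw [Finset.natCast_card_filter]
      refine Finset.sum_congr rfl fun k _ => ?_
      rw [← chi_split (x k) (y k)]
      by_cases h : x k = y k <;> simp [h]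
    have hcalc : Q = ∑ k : Fin n, ∑ x, ∑ y, (w x * w y
        - ∑ c, w x * w y * ((if x k = c then (1:ℚ) else 0) * (if y k = c then 1 else 0))) := by
      calc Q = ∑ x, ∑ y, ∑ k : Fin n, (w x * w y
          - ∑ c, w x * w y * ((if x k = c then (1:ℚ) else 0) * (if y k = c then 1 else 0))) := by
            refine Finset.sum_congr rfl fun x _ => Finset.sum_congr rfl fun y _ => ?_
            rw [hchi x y, Finset.mul_sum]
            refine Finset.sum_congr rfl fun k _ => ?_
            rw [mul_sub, mul_one, Finset.mul_sum]
      _ = _ := by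
            rw [Finset.sum_congr rfl fun x _ => Finset.sum_comm]
            exact Finset.sum_comm
    have hterm : ∀ k : Fin n, ∑ x, ∑ y, (w x * w y
        - ∑ c, w x * w y * ((if x k = c then (1:ℚ) else 0) * (if y k = c then 1 else 0)))
        = - ∑ c, ((Fintype.card ({ j : Fin n // j ≠ k } → Fin (m+1)) : ℚ) * vmap m (p k) c)
            * ((Fintype.card ({ j : Fin n // j ≠ k } → Fin (m+1)) : ℚ) * vmap m (p k) c) := by
      intro k
      simp only [Finset.sum_sub_distrib]
      have h1 : ∑ x, ∑ y, w x * w y = 0 := by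
        rw [← Finset.sum_mul_sum, hwsum, mul_zero]
      have h2 : ∑ x, ∑ y, ∑ c,
          w x * w y * ((if x k = c then (1:ℚ) else 0) * (if y k = c then 1 else 0))
          = ∑ c, ((Fintype.card ({ j : Fin n // j ≠ k } → Fin (m+1)) : ℚ) * vmap m (p k) c)
            * ((Fintype.card ({ j : Fin n // j ≠ k } → Fin (m+1)) : ℚ) * vmap m (p k) c) := by
        rw [Finset.sum_congr rfl fun x _ => Finset.sum_comm]
        rw [Finset.sum_comm]
        refine Finset.sum_congr rfl fun c _ => ?_
        rw [bilinear_factor, hSc k c]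
      rw [h1, h2]
      ring
    rw [hcalc, Finset.sum_congr rfl fun k _ => hterm k]
    obtain ⟨k0, hk0⟩ : ∃ k, p k ≠ 0 := Function.ne_iff.mp hp0
    obtain ⟨c0, hc0⟩ := vmap_exists_ne hk0
    have hD : ∀ k : Fin n, (0:ℚ) < (Fintype.card ({ j : Fin n // j ≠ k } → Fin (m+1)) : ℚ) := by
      intro k
      exact_mod_cast Nat.cast_pos.mpr Fintype.card_pos
    have hlt : ∑ k : Fin n,
        (- ∑ c, ((Fintype.card ({ j : Fin n // j ≠ k } → Fin (m+1)) : ℚ) * vmap m (p k) c)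
            * ((Fintype.card ({ j : Fin n // j ≠ k } → Fin (m+1)) : ℚ) * vmap m (p k) c))
        < ∑ _k : Fin n, (0:ℚ) := by
      refine Finset.sum_lt_sum (fun k _ => ?_) ⟨k0, Finset.mem_univ k0, ?_⟩
      · exact neg_nonpos.mpr (Finset.sum_nonneg fun c _ => mul_self_nonneg _)
      · refine neg_lt_zero.mpr (Finset.sum_pos' (fun c _ => mul_self_nonneg _)
          ⟨c0, Finset.mem_univ c0, ?_⟩)
        exact mul_self_pos.mpr (mul_ne_zero (ne_of_gt (hD k0)) hc0)
    simpa using hlt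
  exact absurd (hQ0 ▸ hQneg) (lt_irrefl 0)

theorem graphN_hamming (n q : ℕ) (hn : 1 ≤ n) (hq : 2 ≤ q) :
    (∃ f : (Fin n → Fin q) → Fin (n * (q - 1)) → Fin 3,
        IsAddressing (hammingGraph n q) f) ∧
      ∀ (t : ℕ) (f : (Fin n → Fin q) → Fin t → Fin 3),
        IsAddressing (hammingGraph n q) f → n * (q - 1) ≤ t := by
  constructor
  · refine ⟨fun x k => addrK q (x (finProdFinEquiv.symm k).1) (finProdFinEquiv.symm k).2, ?_⟩
    intro u v
    rw [hg_dist]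
    exact hg_upper n q u v
  · intro t f hf
    obtain ⟨m, rfl⟩ : ∃ m, q = m + 1 := ⟨q - 1, by omega⟩
    simp only [Nat.add_sub_cancel]
    apply hg_lower f
    intro u v
    have h := hf u v
    rw [hg_dist] at h
    exact_mod_cast congrArg (Nat.cast : ℕ → ℚ) h
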